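/- Let n ≥ 2. The dihedral group DihedralGroup (2^n) of order 2^(n+1) has exactly three maximal subgroups; among them, exactly one is cyclic of order 2^n (namely the subgroup of all rotations, generated by r 1) and the other two are isomorphic to the dihedral group DihedralGroup (2^(n-1)) of order 2^n. -/

import Mathlib

set_option linter.unnecessarySeqFocus false
open DihedralGroup

namespace DMA

/-- general monoid hom `DihedralGroup k →* DihedralGroup m` from an additive hom and shift. -/
def lift2 {k m : ℕ} (φ : ZMod k →+ ZMod m) (a : ZMod m) : DihedralGroup k →* DihedralGroup m where
  toFun x := match x with | r i => r (φ i) | sr i => sr (φ i + a)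
  map_one' := by simp [one_def, -r_zero]
  map_mul' := by
    rintro (i|i) (j|j) <;>
      simp only [r_mul_r, r_mul_sr, sr_mul_r, sr_mul_sr, map_add, map_sub] <;>
      congr 1 <;> ring

@[simp] lemma lift2_r {k m : ℕ} (φ : ZMod k →+ ZMod m) (a : ZMod m) (i : ZMod k) :
    lift2 φ a (r i) = r (φ i) := rfl

@[simp] lemma lift2_sr {k m : ℕ} (φ : ZMod k →+ ZMod m) (a : ZMod m) (i : ZMod k) :
    lift2 φ a (sr i) = sr (φ i + a) := rfl

lemma z2neg : ∀ x : ZMod 2, -x = x := by decide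

/-- monoid hom to `Multiplicative (ZMod 2)`. -/
def toZ2 {m : ℕ} (φ : ZMod m →+ ZMod 2) (a : ZMod 2) :
    DihedralGroup m →* Multiplicative (ZMod 2) where
  toFun x := Multiplicative.ofAdd (match x with | r i => φ i | sr i => φ i + a)
  map_one' := by simp [one_def, -r_zero]
  map_mul' := by
    rintro (i|i) (j|j) <;>
      simp only [r_mul_r, r_mul_sr, sr_mul_r, sr_mul_sr, map_add, map_sub, ← ofAdd_add] <;>
      congr 1 <;> (try simp only [sub_eq_add_neg, z2neg]) <;> ring_nf <;>
        (try simp [show ∀ x : ZMod 2, x * 2 = 0 from by decide])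

@[simp] lemma toZ2_r {m : ℕ} (φ : ZMod m →+ ZMod 2) (a : ZMod 2) (i : ZMod m) :
    toZ2 φ a (r i) = Multiplicative.ofAdd (φ i) := rfl

@[simp] lemma toZ2_sr {m : ℕ} (φ : ZMod m →+ ZMod 2) (a : ZMod 2) (i : ZMod m) :
    toZ2 φ a (sr i) = Multiplicative.ofAdd (φ i + a) := rfl

variable (n : ℕ)

/-- cast `ZMod (2^n) → ZMod 2`. -/
def cch (hn : n ≠ 0) : ZMod (2^n) →+* ZMod 2 := ZMod.castHom (dvd_pow_self 2 hn) (ZMod 2)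

lemma cc_apply (hn : n ≠ 0) (i : ZMod (2^n)) : cch n hn i = ((i.val : ℕ) : ZMod 2) := by
  haveI : NeZero (2^n) := ⟨pow_ne_zero _ two_ne_zero⟩
  rw [cch, ZMod.castHom_apply]
  exact (ZMod.natCast_val i).symm

lemma cc_eq_zero_iff (hn : n ≠ 0) (i : ZMod (2^n)) :
    cch n hn i = 0 ↔ ∃ j : ZMod (2^n), i = 2 * j := by
  haveI : NeZero (2^n) := ⟨pow_ne_zero _ two_ne_zero⟩
  constructor
  · intro h
    rw [cc_apply, ZMod.natCast_eq_zero_iff] at h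
    obtain ⟨t, ht⟩ := h
    exact ⟨(t : ZMod (2^n)), by rw [← ZMod.natCast_zmod_val i, ht]; push_cast; ring⟩
  · rintro ⟨j, rfl⟩
    rw [map_mul]
    have : (cch n hn) 2 = 0 := by
      have : ((2:ℕ) : ZMod (2^n)) = 2 := by push_cast; ring
      rw [← this, map_natCast]
      decide
    rw [this, zero_mul]



def M1 : Subgroup (DihedralGroup (2^n)) := (toZ2 (0 : ZMod (2^n) →+ ZMod 2) 1).ker
def M2 (hn : n ≠ 0) : Subgroup (DihedralGroup (2^n)) :=
  (toZ2 ((cch n hn).toAddMonoidHom) 0).ker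
def M3 (hn : n ≠ 0) : Subgroup (DihedralGroup (2^n)) :=
  (toZ2 ((cch n hn).toAddMonoidHom) 1).ker

lemma mem_M1_r (i : ZMod (2^n)) : r i ∈ M1 n := by
  simp [M1, MonoidHom.mem_ker]

lemma not_mem_M1_sr (i : ZMod (2^n)) : sr i ∉ M1 n := by
  simp [M1, MonoidHom.mem_ker]

lemma mem_M2_r (hn : n ≠ 0) (i : ZMod (2^n)) : r i ∈ M2 n hn ↔ cch n hn i = 0 := by
  simp [M2, MonoidHom.mem_ker]

lemma mem_M2_sr (hn : n ≠ 0) (i : ZMod (2^n)) : sr i ∈ M2 n hn ↔ cch n hn i = 0 := by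
  simp [M2, MonoidHom.mem_ker]

lemma mem_M3_r (hn : n ≠ 0) (i : ZMod (2^n)) : r i ∈ M3 n hn ↔ cch n hn i = 0 := by
  simp [M3, MonoidHom.mem_ker]

lemma mem_M3_sr (hn : n ≠ 0) (i : ZMod (2^n)) : sr i ∈ M3 n hn ↔ cch n hn i = 1 := by
  have h2 : ∀ x : ZMod 2, x + 1 = 0 ↔ x = 1 := by decide
  rw [M3, MonoidHom.mem_ker, toZ2_sr, show (1 : Multiplicative (ZMod 2)) = Multiplicative.ofAdd 0 from rfl]
  rw [Equiv.apply_eq_iff_eq]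
  exact h2 _

lemma index_ker_eq_two {G : Type*} [Group G] (f : G →* Multiplicative (ZMod 2))
    (hs : Function.Surjective f) : f.ker.index = 2 := by
  rw [Subgroup.index_ker, MonoidHom.range_eq_top.2 hs, Subgroup.card_top]
  simp [Nat.card_eq_fintype_card]

lemma z2cases : ∀ y : Multiplicative (ZMod 2),
    y = Multiplicative.ofAdd 0 ∨ y = Multiplicative.ofAdd 1 := by decide

lemma index_M1 : (M1 n).index = 2 := by
  apply index_ker_eq_two
  intro y
  rcases z2cases y with h | h
  · exact ⟨r 0, by simp [h]⟩
  · exact ⟨sr 0, by simp [h]⟩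

lemma index_M2 (hn : n ≠ 0) : (M2 n hn).index = 2 := by
  apply index_ker_eq_two
  intro y
  rcases z2cases y with h | h
  · exact ⟨r 0, by rw [h, toZ2_r]; exact congrArg Multiplicative.ofAdd (map_zero _)⟩
  · exact ⟨r 1, by rw [h, toZ2_r]; exact congrArg Multiplicative.ofAdd (map_one (cch n hn))⟩

lemma index_M3 (hn : n ≠ 0) : (M3 n hn).index = 2 := by
  apply index_ker_eq_two
  intro y
  rcases z2cases y with h | h
  · exact ⟨r 0, by rw [h, toZ2_r]; exact congrArg Multiplicative.ofAdd (map_zero _)⟩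
  · refine ⟨sr 0, ?_⟩
    rw [h, toZ2_sr]
    refine congrArg Multiplicative.ofAdd ?_
    rw [map_zero, zero_add]


lemma coatom_of_index_two {G : Type*} [Group G] (H : Subgroup G) (h : H.index = 2) :
    IsCoatom H := by
  constructor
  · intro htop
    rw [htop, Subgroup.index_top] at h
    omega
  · intro K hK
    have hle : H ≤ K := hK.le
    have hmul := Subgroup.relIndex_mul_index hle
    rw [h] at hmul
    have hne : H.relIndex K ≠ 1 := by
      simp only [ne_eq, Subgroup.relIndex_eq_one]
      exact fun hKH => hK.not_ge hKH
    have hdvd : K.index ∣ 2 := Dvd.intro_left _ hmul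
    rcases (Nat.dvd_prime Nat.prime_two).1 hdvd with h1 | h1
    · exact Subgroup.index_eq_one.mp h1
    · exfalso; rw [h1] at hmul; omega

lemma eq_of_le_index_two {G : Type*} [Group G] {H K : Subgroup G} (hle : H ≤ K)
    (hH : H.index = 2) (hK : K.index = 2) : K = H := by
  refine le_antisymm (Subgroup.relIndex_eq_one.mp ?_) hle
  have := Subgroup.relIndex_mul_index hle
  rw [hH, hK] at this
  omega

lemma index_eq_two_of_coatom (hn : 2 ≤ n) (H : Subgroup (DihedralGroup (2^n)))
    (hH : IsCoatom H) : H.index = 2 := by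
  haveI : NeZero (2^n) := ⟨pow_ne_zero _ two_ne_zero⟩
  haveI : Fact (Nat.Prime 2) := ⟨Nat.prime_two⟩
  have hcard : Nat.card (DihedralGroup (2^n)) = 2 ^ (n+1) := by
    rw [DihedralGroup.nat_card]; ring
  haveI : Group.IsNilpotent (DihedralGroup (2^n)) :=
    (IsPGroup.of_card hcard).isNilpotent
  have hnormal : H.Normal :=
    Subgroup.NormalizerCondition.normal_of_coatom H normalizerCondition_of_isNilpotent hH
  have hdvd : H.index ∣ 2 ^ (n+1) := by rw [← hcard]; exact Subgroup.index_dvd_card H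
  have hne1 : H.index ≠ 1 := fun h1 => hH.1 (Subgroup.index_eq_one.mp h1)
  have h2dvd : 2 ∣ H.index := by
    obtain ⟨k, hk, hke⟩ := (Nat.dvd_prime_pow Nat.prime_two).1 hdvd
    rcases Nat.eq_zero_or_pos k with rfl | hkpos
    · rw [pow_zero] at hke; exact absurd hke hne1
    · exact hke ▸ dvd_pow_self 2 hkpos.ne'
  rw [Subgroup.index_eq_card] at h2dvd ⊢
  obtain ⟨x, hx⟩ := exists_prime_orderOf_dvd_card' (G := DihedralGroup (2^n) ⧸ H) 2 h2dvd
  set K := (Subgroup.zpowers x).comap (QuotientGroup.mk' H) with hK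
  have hle : H ≤ K := by
    show H ≤ Subgroup.comap (QuotientGroup.mk' H) (Subgroup.zpowers x)
    conv_lhs => rw [← QuotientGroup.ker_mk' H]
    exact Subgroup.ker_le_comap _ _
  have hne : H ≠ K := by
    obtain ⟨g, hg⟩ := QuotientGroup.mk'_surjective H x
    intro heq
    have hgK : g ∈ K := by
      rw [hK, Subgroup.mem_comap, hg]
      exact Subgroup.mem_zpowers x
    have hgH : g ∈ H := heq ▸ hgK
    have : (QuotientGroup.mk' H) g = 1 := by
      rwa [← QuotientGroup.ker_mk' H, MonoidHom.mem_ker] at hgH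
    rw [hg] at this
    rw [this, orderOf_one] at hx
    omega
  have htop : K = ⊤ := hH.2 K (lt_of_le_of_ne hle hne)
  have hzt : Subgroup.zpowers x = ⊤ := by
    apply Subgroup.comap_injective (QuotientGroup.mk'_surjective H)
    rw [← hK, htop, Subgroup.comap_top]
  calc Nat.card (DihedralGroup (2^n) ⧸ H)
      = Nat.card (⊤ : Subgroup (DihedralGroup (2^n) ⧸ H)) := (Subgroup.card_top).symm
    _ = Nat.card (Subgroup.zpowers x) := by rw [hzt]
    _ = orderOf x := Nat.card_zpowers x
    _ = 2 := hx

lemma r_pow {m : ℕ} [NeZero m] (i : ZMod m) (k : ℕ) :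
    (r i : DihedralGroup m) ^ k = r (i * (k : ZMod m)) := by
  conv_lhs => rw [← ZMod.natCast_zmod_val i, ← r_one_pow]
  rw [← pow_mul, r_one_pow]
  congr 1
  push_cast [ZMod.natCast_zmod_val]
  ring


lemma rotations_even_mem (hn : n ≠ 0) (H : Subgroup (DihedralGroup (2^n))) (hidx : H.index = 2)
    (i : ZMod (2^n)) (hi : cch n hn i = 0) : r i ∈ H := by
  haveI : NeZero (2^n) := ⟨pow_ne_zero _ two_ne_zero⟩
  have hr2 : (r 2 : DihedralGroup (2^n)) ∈ H := by
    have h12 : (r 2 : DihedralGroup (2^n)) = r 1 * r 1 := by rw [r_mul_r]; norm_num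
    rw [h12, Subgroup.mul_mem_iff_of_index_two hidx]
  obtain ⟨j, rfl⟩ := (cc_eq_zero_iff n hn _).1 hi
  have hj : (r (2*j) : DihedralGroup (2^n)) = (r 2)^(j.val) := by
    rw [r_pow]
    congr 1
    rw [ZMod.natCast_zmod_val]
  rw [hj]
  exact pow_mem hr2 _

lemma coatom_cases (hn : n ≠ 0) (H : Subgroup (DihedralGroup (2^n)))
    (hidx : H.index = 2) : H = M1 n ∨ H = M2 n hn ∨ H = M3 n hn := by
  haveI : NeZero (2^n) := ⟨pow_ne_zero _ two_ne_zero⟩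
  have heven := rotations_even_mem n hn H hidx
  by_cases hr1 : r 1 ∈ H
  · left
    apply eq_of_le_index_two ?_ (index_M1 n) hidx
    intro x hx
    rcases x with i | i
    · have h1 : (r i : DihedralGroup (2^n)) = (r 1)^(i.val) := by
        rw [r_pow, one_mul, ZMod.natCast_zmod_val]
      rw [h1]; exact pow_mem hr1 _
    · exact absurd hx (not_mem_M1_sr n i)
  · by_cases hs0 : sr 0 ∈ H
    · right; left
      apply eq_of_le_index_two ?_ (index_M2 n hn) hidx
      intro x hx
      rcases x with i | i
      · exact heven i ((mem_M2_r n hn i).1 hx)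
      · have hi := (mem_M2_sr n hn i).1 hx
        have h1 : (sr i : DihedralGroup (2^n)) = sr 0 * r i := by rw [sr_mul_r, zero_add]
        rw [h1]; exact mul_mem hs0 (heven i hi)
    · by_cases hs1 : sr 1 ∈ H
      · right; right
        apply eq_of_le_index_two ?_ (index_M3 n hn) hidx
        intro x hx
        rcases x with i | i
        · exact heven i ((mem_M3_r n hn i).1 hx)
        · have hi := (mem_M3_sr n hn i).1 hx
          have hsub : cch n hn (i - 1) = 0 := by rw [map_sub, hi, map_one, sub_self]
          have h1 : (sr i : DihedralGroup (2^n)) = sr 1 * r (i - 1) := by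
            rw [sr_mul_r]; congr 1; ring
          rw [h1]; exact mul_mem hs1 (heven _ hsub)
      · exfalso
        apply hs0
        have h1 : (sr 0 : DihedralGroup (2^n)) = r 1 * sr 1 := by rw [r_mul_sr, sub_self]
        rw [h1, Subgroup.mul_mem_iff_of_index_two hidx]
        exact iff_of_false hr1 hs1


lemma isCyclic_zpowers {G : Type*} [Group G] (g : G) : IsCyclic (Subgroup.zpowers g) := by
  refine ⟨⟨⟨g, Subgroup.mem_zpowers g⟩, fun x => ?_⟩⟩
  obtain ⟨k, hk⟩ := x.2
  exact ⟨k, Subtype.ext (by push_cast; exact hk)⟩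

lemma M1_eq : M1 n = Subgroup.zpowers (r (1 : ZMod (2^n))) := by
  haveI : NeZero (2^n) := ⟨pow_ne_zero _ two_ne_zero⟩
  apply le_antisymm
  · intro x hx
    rcases x with i | i
    · exact Subgroup.mem_zpowers_iff.mpr
        ⟨(i.val : ℤ), by rw [zpow_natCast, r_one_pow, ZMod.natCast_zmod_val]⟩
    · exact absurd hx (not_mem_M1_sr n i)
  · exact Subgroup.zpowers_le.mpr (mem_M1_r n 1)

lemma card_M1 : Nat.card (M1 n) = 2^n := by
  haveI : NeZero (2^n) := ⟨pow_ne_zero _ two_ne_zero⟩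
  rw [M1_eq, Nat.card_zpowers, orderOf_r_one]

lemma cyclic_M1 : IsCyclic (M1 n) := by
  rw [M1_eq]
  exact isCyclic_zpowers _

lemma card_of_index_two (H : Subgroup (DihedralGroup (2^n))) (hidx : H.index = 2) :
    Nat.card H = 2^n := by
  have h := Subgroup.card_mul_index (H := H)
  rw [hidx, DihedralGroup.nat_card] at h
  omega

lemma r_two_mul_pow (hn : 2 ≤ n) (j : ZMod (2^n)) :
    (r (2*j) : DihedralGroup (2^n))^(2^(n-1)) = 1 := by
  haveI : NeZero (2^n) := ⟨pow_ne_zero _ two_ne_zero⟩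
  rw [r_pow]
  have h0 : (2*j) * ((2^(n-1) : ℕ) : ZMod (2^n)) = 0 := by
    have he : 2^(n-1)*2 = 2^n := by
      conv_rhs => rw [show n = (n-1)+1 by omega]
      rw [pow_succ]
    calc (2*j) * ((2^(n-1):ℕ) : ZMod (2^n))
        = j * (((2^(n-1) * 2 : ℕ)) : ZMod (2^n)) := by push_cast; ring
      _ = j * ((2^n : ℕ) : ZMod (2^n)) := by rw [he]
      _ = 0 := by rw [ZMod.natCast_self, mul_zero]
  rw [h0, one_def]

lemma sr_pow (hn : 2 ≤ n) (i : ZMod (2^n)) :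
    (sr i : DihedralGroup (2^n))^(2^(n-1)) = 1 := by
  have h2t : 2^(n-1) = 2 * 2^(n-2) := by
    conv_lhs => rw [show n - 1 = (n-2)+1 by omega]
    rw [pow_succ, mul_comm]
  rw [h2t, pow_mul, pow_two, sr_mul_self, one_pow]

lemma not_cyclic_of (hn : 2 ≤ n) (H : Subgroup (DihedralGroup (2^n)))
    (hcard : Nat.card H = 2^n)
    (hpow : ∀ x ∈ H, x ^ (2^(n-1)) = 1) : ¬ IsCyclic H := by
  intro hc
  obtain ⟨g, hg⟩ := hc.exists_generator
  have htop : Subgroup.zpowers g = ⊤ := by rw [Subgroup.eq_top_iff']; exact hg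
  have hcg : orderOf g = 2^n := by
    rw [← Nat.card_zpowers, htop, Subgroup.card_top, hcard]
  have hpg : g ^ (2^(n-1)) = 1 := Subtype.ext (by push_cast; exact hpow g.1 g.2)
  have hdvd : 2^n ∣ 2^(n-1) := hcg ▸ orderOf_dvd_of_pow_eq_one hpg
  have hle := Nat.le_of_dvd (by positivity) hdvd
  have hlt : 2^(n-1) < 2^n := Nat.pow_lt_pow_right (by norm_num) (by omega)
  omega

lemma not_cyclic_M2 (hn : 2 ≤ n) (hn0 : n ≠ 0) : ¬ IsCyclic (M2 n hn0) := by
  refine not_cyclic_of n hn _ (card_of_index_two n _ (index_M2 n hn0)) ?_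
  rintro (i | i) hx
  · obtain ⟨j, rfl⟩ := (cc_eq_zero_iff n hn0 _).1 ((mem_M2_r n hn0 i).1 hx)
    exact r_two_mul_pow n hn j
  · exact sr_pow n hn i

lemma not_cyclic_M3 (hn : 2 ≤ n) (hn0 : n ≠ 0) : ¬ IsCyclic (M3 n hn0) := by
  refine not_cyclic_of n hn _ (card_of_index_two n _ (index_M3 n hn0)) ?_
  rintro (i | i) hx
  · obtain ⟨j, rfl⟩ := (cc_eq_zero_iff n hn0 _).1 ((mem_M3_r n hn0 i).1 hx)
    exact r_two_mul_pow n hn j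
  · exact sr_pow n hn i


lemma two_pow_eq (hn : n ≠ 0) : 2 * 2^(n-1) = 2^n := by
  conv_rhs => rw [show n = (n-1)+1 by omega]
  rw [pow_succ]
  ring

/-- The doubling homomorphism `ZMod (2^(n-1)) →+ ZMod (2^n)`. -/
def delta (hn : n ≠ 0) : ZMod (2^(n-1)) →+ ZMod (2^n) :=
  ZMod.lift (2^(n-1)) ⟨(zmultiplesHom (ZMod (2^n))) 2, by
    have hz : ((2^n : ℕ) : ZMod (2^n)) = 0 := ZMod.natCast_self _
    push_cast at hz
    simp only [zmultiplesHom_apply, zsmul_eq_mul]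
    push_cast
    rw [show ((2:ZMod (2^n)))^(n-1) * 2 = 2^n by rw [← pow_succ]; congr 1; omega, hz]⟩

lemma delta_apply (hn : n ≠ 0) (j : ZMod (2^(n-1))) :
    delta n hn j = 2 * ((j.val : ℕ) : ZMod (2^n)) := by
  haveI : NeZero (2^(n-1)) := ⟨pow_ne_zero _ two_ne_zero⟩
  conv_lhs => rw [← ZMod.natCast_zmod_val j,
    show ((j.val : ℕ) : ZMod (2^(n-1))) = ((j.val : ℤ) : ZMod (2^(n-1))) by push_cast; rfl]
  rw [delta, ZMod.lift_coe]
  rw [zmultiplesHom_apply, zsmul_eq_mul]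
  push_cast
  ring

lemma delta_inj (hn : n ≠ 0) : Function.Injective (delta n hn) := by
  haveI : NeZero (2^(n-1)) := ⟨pow_ne_zero _ two_ne_zero⟩
  rw [injective_iff_map_eq_zero]
  intro j hj
  rw [delta_apply] at hj
  have h0 : ((2*j.val : ℕ) : ZMod (2^n)) = 0 := by push_cast; rw [← hj]
  rw [ZMod.natCast_eq_zero_iff] at h0
  have hj2 : 2^(n-1) ∣ j.val := by
    obtain ⟨t, ht⟩ := h0
    refine ⟨t, ?_⟩
    have h1 : 2 * j.val = 2 * (2^(n-1) * t) := by
      rw [ht, ← two_pow_eq n hn]; ring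
    omega
  have hlt : j.val < 2^(n-1) := ZMod.val_lt j
  have := Nat.eq_zero_of_dvd_of_lt hj2 hlt
  · exact (ZMod.val_eq_zero j).mp (by omega)

lemma cc_delta (hn : n ≠ 0) (j : ZMod (2^(n-1))) : cch n hn (delta n hn j) = 0 :=
  (cc_eq_zero_iff n hn _).2 ⟨_, delta_apply n hn j⟩

lemma delta_surj (hn : n ≠ 0) (i : ZMod (2^n)) (hi : cch n hn i = 0) :
    ∃ j, delta n hn j = i := by
  haveI : NeZero (2^n) := ⟨pow_ne_zero _ two_ne_zero⟩
  obtain ⟨k, rfl⟩ := (cc_eq_zero_iff n hn _).1 hi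
  refine ⟨((k.val : ℕ) : ZMod (2^(n-1))), ?_⟩
  rw [delta_apply, ZMod.val_natCast]
  have h1 : 2 * k.val = 2 * (k.val % 2^(n-1)) + 2^n * (k.val / 2^(n-1)) := by
    have h0 := Nat.mod_add_div k.val (2^(n-1))
    calc 2*k.val = 2*(k.val % 2^(n-1) + 2^(n-1)*(k.val/2^(n-1))) := by rw [h0]
      _ = 2*(k.val % 2^(n-1)) + (2*2^(n-1))*(k.val/2^(n-1)) := by ring
      _ = 2*(k.val % 2^(n-1)) + 2^n*(k.val/2^(n-1)) := by rw [two_pow_eq n hn]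
  have hz : ((2:ZMod (2^n)))^n = 0 := by
    have := ZMod.natCast_self (2^n)
    push_cast at this
    exact this
  have key : ((2 * k.val : ℕ) : ZMod (2^n)) = ((2 * (k.val % 2^(n-1)) : ℕ) : ZMod (2^n)) := by
    rw [h1]
    push_cast
    rw [hz]
    ring
  push_cast at key
  rw [← key, ZMod.natCast_zmod_val]

lemma lift2_inj {k m : ℕ} (φ : ZMod k →+ ZMod m) (a : ZMod m)
    (hφ : Function.Injective φ) : Function.Injective (lift2 φ a) := by
  rintro (i|i) (j|j) h <;>
    simp only [lift2_r, lift2_sr, r.injEq, sr.injEq, reduceCtorEq] at h ⊢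
  · exact hφ h
  · exact hφ (add_right_cancel h)

lemma range_psi2 (hn : n ≠ 0) : (lift2 (delta n hn) 0).range = M2 n hn := by
  ext x
  constructor
  · rintro ⟨(j|j), rfl⟩
    · rw [lift2_r]; exact (mem_M2_r n hn _).2 (cc_delta n hn j)
    · rw [lift2_sr, add_zero]; exact (mem_M2_sr n hn _).2 (cc_delta n hn j)
  · intro hx
    rcases x with i | i
    · obtain ⟨j, hj⟩ := delta_surj n hn i ((mem_M2_r n hn i).1 hx)
      exact ⟨r j, by rw [lift2_r, hj]⟩
    · obtain ⟨j, hj⟩ := delta_surj n hn i ((mem_M2_sr n hn i).1 hx)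
      exact ⟨sr j, by rw [lift2_sr, add_zero, hj]⟩

lemma range_psi3 (hn : n ≠ 0) : (lift2 (delta n hn) 1).range = M3 n hn := by
  ext x
  constructor
  · rintro ⟨(j|j), rfl⟩
    · rw [lift2_r]; exact (mem_M3_r n hn _).2 (cc_delta n hn j)
    · rw [lift2_sr]
      refine (mem_M3_sr n hn _).2 ?_
      rw [map_add, map_one]
      have : cch n hn (delta n hn j) = 0 := cc_delta n hn j
      rw [this, zero_add]
  · intro hx
    rcases x with i | i
    · obtain ⟨j, hj⟩ := delta_surj n hn i ((mem_M3_r n hn i).1 hx)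
      exact ⟨r j, by rw [lift2_r, hj]⟩
    · have hi := (mem_M3_sr n hn i).1 hx
      have hsub : cch n hn (i - 1) = 0 := by rw [map_sub, hi, map_one, sub_self]
      obtain ⟨j, hj⟩ := delta_surj n hn (i-1) hsub
      refine ⟨sr j, ?_⟩
      rw [lift2_sr, hj]
      congr 1
      ring

noncomputable def iso2 (hn : n ≠ 0) : M2 n hn ≃* DihedralGroup (2^(n-1)) :=
  (MulEquiv.subgroupCongr (range_psi2 n hn).symm).trans
    (MonoidHom.ofInjective (lift2_inj _ _ (delta_inj n hn))).symm

noncomputable def iso3 (hn : n ≠ 0) : M3 n hn ≃* DihedralGroup (2^(n-1)) :=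
  (MulEquiv.subgroupCongr (range_psi3 n hn).symm).trans
    (MonoidHom.ofInjective (lift2_inj _ _ (delta_inj n hn))).symm

end DMA

/-- `DihedralGroup (2^n)` (`n ≥ 2`) has exactly three maximal subgroups: the cyclic
rotation subgroup `⟨r 1⟩` of order `2^n`, and two noncyclic subgroups isomorphic to
`DihedralGroup (2^(n-1))`. -/
theorem dihedral_maximal_subgroups (n : ℕ) (hn : 2 ≤ n) :
    ∃ M₁ M₂ M₃ : Subgroup (DihedralGroup (2 ^ n)),
      M₁ ≠ M₂ ∧ M₁ ≠ M₃ ∧ M₂ ≠ M₃ ∧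
      {M : Subgroup (DihedralGroup (2 ^ n)) | IsCoatom M} = {M₁, M₂, M₃} ∧
      M₁ = Subgroup.zpowers (r (1 : ZMod (2 ^ n))) ∧
      IsCyclic M₁ ∧ Nat.card M₁ = 2 ^ n ∧
      ¬ IsCyclic M₂ ∧ ¬ IsCyclic M₃ ∧
      Nonempty (M₂ ≃* DihedralGroup (2 ^ (n - 1))) ∧
      Nonempty (M₃ ≃* DihedralGroup (2 ^ (n - 1))) := by
  have hn0 : n ≠ 0 := by omega
  refine ⟨DMA.M1 n, DMA.M2 n hn0, DMA.M3 n hn0, ?_, ?_, ?_, ?_, ?_, ?_, ?_, ?_, ?_, ?_, ?_⟩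
  · intro h
    exact DMA.not_mem_M1_sr n 0 (h ▸ (DMA.mem_M2_sr n hn0 0).2 (map_zero _))
  · intro h
    exact DMA.not_mem_M1_sr n 1 (h ▸ (DMA.mem_M3_sr n hn0 1).2 (map_one _))
  · intro h
    have h0 : sr (0 : ZMod (2^n)) ∈ DMA.M2 n hn0 := (DMA.mem_M2_sr n hn0 0).2 (map_zero _)
    rw [h] at h0
    have := (DMA.mem_M3_sr n hn0 0).1 h0
    rw [map_zero] at this
    exact (by decide : (0 : ZMod 2) ≠ 1) this
  · ext M
    simp only [Set.mem_setOf_eq, Set.mem_insert_iff, Set.mem_singleton_iff]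
    constructor
    · intro hM
      exact DMA.coatom_cases n hn0 M (DMA.index_eq_two_of_coatom n hn M hM)
    · rintro (rfl | rfl | rfl)
      · exact DMA.coatom_of_index_two _ (DMA.index_M1 n)
      · exact DMA.coatom_of_index_two _ (DMA.index_M2 n hn0)
      · exact DMA.coatom_of_index_two _ (DMA.index_M3 n hn0)
  · exact DMA.M1_eq n
  · exact DMA.cyclic_M1 n
  · exact DMA.card_M1 n
  · exact DMA.not_cyclic_M2 n hn hn0
  · exact DMA.not_cyclic_M3 n hn hn0
  · exact ⟨DMA.iso2 n hn0⟩
  · exact ⟨DMA.iso3 n hn0⟩
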